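/- Fix a positive integer N, an integer k, and τ ∈ ℍ, and let Z_k^{(N)} = {z ∈ ℂ : θ_k^{(N)}(z,τ) = 0} be the set of zeros of z ↦ θ_k^{(N)}(z,τ). If N is odd, then Z_k^{(N)} = { m/N + (k/N)τ + nτ : m, n ∈ ℤ }. If N is even, then Z_k^{(N)} = { 1/(2N) + m/N + (k/N)τ + nτ : m, n ∈ ℤ }. -/

import Mathlib

open scoped UpperHalfPlane

/-- `e(x) = exp(2πix)`. -/
noncomputable def e (x : ℂ) : ℂ := Complex.exp (2 * Real.pi * Complex.I * x)

/-- The theta function with characteristic `(p, q)`: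
`θ_{(p,q)}(z,τ) = ∑_{n ∈ ℤ} e((1/2)(n+p)²τ + (n+p)(z+q))`. -/
noncomputable def jtheta (p q : ℝ) (z τ : ℂ) : ℂ :=
  ∑' n : ℤ, e ((1 / 2 : ℂ) * ((n : ℂ) + p) ^ 2 * τ + ((n : ℂ) + p) * (z + q))

/-- `θ_k^{(N)}(z,τ) = θ_{(1/2 - k/N, N/2)}(Nz, Nτ)`. -/
noncomputable def thetaN (N : ℕ) (k : ℝ) (z τ : ℂ) : ℂ :=
  jtheta (1 / 2 - k / N) (N / 2) (N * z) (N * τ)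

section ThetaAux
open Complex Real

noncomputable section

lemma summable_norm_jtt {z τ : ℂ} (hτ : 0 < τ.im) :
    Summable (fun n : ℤ => ‖jacobiTheta₂_term n z τ‖) :=
  summable_norm_iff.mpr ((summable_jacobiTheta₂_term_iff z τ).mpr hτ)

/-- The product identity `θ₃(z,τ)θ₄(z,τ) = θ₄(2z,2τ)θ₄(0,2τ)`. -/
lemma theta_prod_identity (z τ : ℂ) (hτ : 0 < τ.im) :
    jacobiTheta₂ z τ * jacobiTheta₂ (z + 1/2) τ =
      jacobiTheta₂ (2*z + 1/2) (2*τ) * jacobiTheta₂ (1/2) (2*τ) := by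
  have h2τ : 0 < (2*τ).im := by simp [Complex.mul_im]; linarith
  set f : ℤ → ℂ := fun m => jacobiTheta₂_term m z τ with hf
  set g : ℤ → ℂ := fun n => jacobiTheta₂_term n (z + 1/2) τ with hg
  set A : ℤ → ℂ := fun u => jacobiTheta₂_term u (2*z + 1/2) (2*τ) with hA
  set B : ℤ → ℂ := fun v => jacobiTheta₂_term v (1/2) (2*τ) with hB
  set C : ℤ → ℂ := fun u => cexp (2*π*I*z + π*I*τ) * jacobiTheta₂_term u (2*z + 1/2 + τ) (2*τ) with hC
  set D : ℤ → ℂ := fun v => jacobiTheta₂_term v (τ - 1/2) (2*τ) with hD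
  -- the two injections
  set ι₀ : ℤ × ℤ → ℤ × ℤ := fun p => (p.1 + p.2, p.1 - p.2) with hι₀
  set ι₁ : ℤ × ℤ → ℤ × ℤ := fun p => (p.1 + p.2 + 1, p.1 - p.2) with hι₁
  have hinj₀ : Function.Injective ι₀ := by
    intro p q h
    simp only [hι₀, Prod.mk.injEq] at h
    exact Prod.ext (by omega) (by omega)
  have hinj₁ : Function.Injective ι₁ := by
    intro p q h
    simp only [hι₁, Prod.mk.injEq] at h
    exact Prod.ext (by omega) (by omega)
  have hrange : Set.range ι₁ = (Set.range ι₀)ᶜ := by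
    ext p
    obtain ⟨x, y⟩ := p
    simp only [Set.mem_range, Set.mem_compl_iff, hι₀, hι₁, Prod.mk.injEq, Prod.exists]
    constructor
    · rintro ⟨a, b, h1, h2⟩ ⟨c, d, h3, h4⟩; omega
    · intro h
      by_cases hp : (x + y) % 2 = 0
      · refine absurd ?_ h
        refine ⟨(x + y)/2, (x - y)/2, by omega, by omega⟩
      · exact ⟨(x + y - 1)/2, (x - y - 1)/2, by omega, by omega⟩
  -- pointwise identities
  have key₀ : ∀ u v : ℤ, f (u+v) * g (u-v) = A u * B v := by
    intro u v
    simp only [hf, hg, hA, hB, jacobiTheta₂_term, ← Complex.exp_add]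
    rw [show (2*π*I*(u+v:ℤ)*z + π*I*(u+v:ℤ)^2*τ) + (2*π*I*(u-v:ℤ)*(z+1/2) + π*I*(u-v:ℤ)^2*τ)
        = (2*π*I*u*(2*z+1/2) + π*I*u^2*(2*τ) + (2*π*I*v*(1/2) + π*I*v^2*(2*τ))) + (-v : ℤ) * (2*π*I)
        by push_cast; ring]
    rw [Complex.exp_add, Complex.exp_int_mul_two_pi_mul_I, mul_one]
  have key₁ : ∀ u v : ℤ, f (u+v+1) * g (u-v) = C u * D v := by
    intro u v
    simp only [hf, hg, hC, hD, jacobiTheta₂_term, ← Complex.exp_add]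
    congr 1
    push_cast
    ring
  have hDpair : ∀ v : ℤ, D (-1 - v) = - D v := by
    intro v
    simp only [hD, jacobiTheta₂_term]
    rw [show (2*π*I*(-1-v:ℤ)*(τ-1/2) + π*I*(-1-v:ℤ)^2*(2*τ))
        = ((2*π*I*v*(τ-1/2) + π*I*v^2*(2*τ)) + π*I) + (v : ℤ) * (2*π*I) by push_cast; ring]
    rw [Complex.exp_add, Complex.exp_int_mul_two_pi_mul_I, mul_one, Complex.exp_add,
      Complex.exp_pi_mul_I, mul_neg_one]
  -- summabilities
  have hsf : Summable fun n : ℤ => ‖f n‖ := summable_norm_jtt hτ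
  have hsg : Summable fun n : ℤ => ‖g n‖ := summable_norm_jtt hτ
  have hsA : Summable fun n : ℤ => ‖A n‖ := summable_norm_jtt h2τ
  have hsB : Summable fun n : ℤ => ‖B n‖ := summable_norm_jtt h2τ
  have hsC : Summable fun n : ℤ => ‖C n‖ := by
    simpa only [hC, norm_mul] using (summable_norm_jtt (z := 2*z+1/2+τ) h2τ).mul_left _
  have hsD : Summable fun n : ℤ => ‖D n‖ := summable_norm_jtt h2τ
  set h : ℤ × ℤ → ℂ := fun p => f p.1 * g p.2 with hh
  have hsum_h : Summable h := summable_mul_of_summable_norm hsf hsg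
  have hAB : HasSum (fun p : ℤ × ℤ => A p.1 * B p.2)
      (jacobiTheta₂ (2*z + 1/2) (2*τ) * jacobiTheta₂ (1/2) (2*τ)) := by
    have hs := (summable_mul_of_summable_norm hsA hsB)
    have := hs.hasSum
    rwa [← tsum_mul_tsum_of_summable_norm hsA hsB] at this
  have hD0 : ∑' v : ℤ, D v = 0 := by
    have he := (Equiv.subLeft (-1 : ℤ)).tsum_eq D
    simp only [Equiv.subLeft_apply] at he
    have : ∑' v : ℤ, D (-1 - v) = - ∑' v : ℤ, D v := by
      rw [← tsum_neg]
      exact tsum_congr fun v => hDpair v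
    rw [this] at he
    linear_combination -he/2
  have hCD : HasSum (fun p : ℤ × ℤ => C p.1 * D p.2) 0 := by
    have hs : Summable fun p : ℤ × ℤ => C p.1 * D p.2 := summable_mul_of_summable_norm hsC hsD
    have : ∑' p : ℤ × ℤ, C p.1 * D p.2 = 0 := by
      rw [Summable.tsum_prod' hs fun u => (hsD.of_norm.mul_left (C u))]
      simp only [tsum_mul_left, hD0, mul_zero, tsum_zero]
    exact this ▸ hs.hasSum
  -- sums over the two ranges
  have h₀ : HasSum (h ∘ ((↑) : Set.range ι₀ → ℤ × ℤ))
      (jacobiTheta₂ (2*z + 1/2) (2*τ) * jacobiTheta₂ (1/2) (2*τ)) := by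
    rw [← (Equiv.ofInjective ι₀ hinj₀).hasSum_iff]
    have : (h ∘ ((↑) : Set.range ι₀ → ℤ × ℤ)) ∘ (Equiv.ofInjective ι₀ hinj₀)
        = fun p : ℤ × ℤ => A p.1 * B p.2 := by
      funext p
      simpa only [Function.comp_apply, Equiv.ofInjective_apply, hh, hι₀] using key₀ p.1 p.2
    rw [this]
    exact hAB
  have h₁ : HasSum (h ∘ ((↑) : Set.range ι₁ → ℤ × ℤ)) 0 := by
    rw [← (Equiv.ofInjective ι₁ hinj₁).hasSum_iff]
    have : (h ∘ ((↑) : Set.range ι₁ → ℤ × ℤ)) ∘ (Equiv.ofInjective ι₁ hinj₁)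
        = fun p : ℤ × ℤ => C p.1 * D p.2 := by
      funext p
      have := key₁ p.1 p.2
      simpa only [Function.comp_apply, Equiv.ofInjective_apply, hh, hι₁] using this
    rw [this]
    exact hCD
  have h₁' : HasSum (h ∘ ((↑) : ((Set.range ι₀)ᶜ : Set (ℤ × ℤ)) → ℤ × ℤ)) 0 := by
    rw [← hrange]; exact h₁
  have htot : HasSum h (jacobiTheta₂ (2*z + 1/2) (2*τ) * jacobiTheta₂ (1/2) (2*τ) + 0) :=
    h₀.add_compl h₁'
  rw [add_zero] at htot
  calc jacobiTheta₂ z τ * jacobiTheta₂ (z + 1/2) τ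
      = ∑' p : ℤ × ℤ, f p.1 * g p.2 := tsum_mul_tsum_of_summable_norm hsf hsg
    _ = _ := htot.tsum_eq

lemma jacobiTheta₂_ne_zero_of_small {z τ : ℂ} {r : ℝ} (hτ : 0 < τ.im) (hr : 0 ≤ r)
    (hz : |z.im| ≤ r * τ.im) (hx : rexp (-(π * τ.im * (1 - 2*r))) < 1/3) :
    jacobiTheta₂ z τ ≠ 0 := by
  set x := rexp (-(π * τ.im * (1 - 2*r))) with hxdef
  have hx0 : 0 < x := Real.exp_pos _
  have hx1 : x < 1 := lt_trans hx (by norm_num)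
  have hsummable := (summable_jacobiTheta₂_term_iff z τ).mpr hτ
  have hnorm : Summable (fun n : ℤ => ‖jacobiTheta₂_term n z τ‖) := summable_norm_iff.mpr hsummable
  -- term bound
  have hbound : ∀ n : ℤ, n ≠ 0 → ‖jacobiTheta₂_term n z τ‖ ≤ x ^ n.natAbs := by
    intro n hn
    rw [norm_jacobiTheta₂_term, hxdef, ← Real.exp_nat_mul]
    apply Real.exp_le_exp.mpr
    have hcast : ((n.natAbs : ℕ) : ℝ) = |(n : ℝ)| := by
      rw [Nat.cast_natAbs]
      push_cast
      ring
    rw [hcast]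
    have ha : (1 : ℝ) ≤ |(n : ℝ)| := by
      have h1 : 1 ≤ |n| := Int.one_le_abs (by exact_mod_cast hn)
      calc (1:ℝ) ≤ ((|n| : ℤ) : ℝ) := by exact_mod_cast h1
        _ = |(n : ℝ)| := by push_cast; ring
    have hn2 : ((n:ℝ))^2 = |(n:ℝ)|^2 := (_root_.sq_abs _).symm
    have t1 : 0 ≤ π * τ.im * (|(n:ℝ)|^2 - |(n:ℝ)|) := by
      apply mul_nonneg (mul_nonneg pi_pos.le hτ.le)
      nlinarith
    have t2 : 0 ≤ π * ((n:ℝ) * z.im + |(n:ℝ)| * (r * τ.im)) := by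
      apply mul_nonneg pi_pos.le
      have h1 : -(|(n:ℝ)| * |z.im|) ≤ (n:ℝ) * z.im := by
        rw [← abs_mul]; exact neg_abs_le _
      have h2 : |(n:ℝ)| * |z.im| ≤ |(n:ℝ)| * (r * τ.im) :=
        mul_le_mul_of_nonneg_left hz (abs_nonneg _)
      linarith
    have hn2' : π * τ.im * ((n:ℝ))^2 = π * τ.im * |(n:ℝ)|^2 := by rw [hn2]
    linarith [t1, t2, hn2']
  -- geometric majorant summable
  have hgeo : Summable (fun n : ℕ => x ^ n) := summable_geometric_of_lt_one hx0.le hx1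
  have hmaj : Summable (fun n : ℤ => x ^ n.natAbs) := by
    apply Summable.of_nat_of_neg_add_one
    · simpa using hgeo
    · have : (fun n : ℕ => x ^ (-(n+1) : ℤ).natAbs) = fun n : ℕ => x ^ (n+1) := by
        funext n
        have hna : ((-(n+1) : ℤ)).natAbs = n + 1 := by omega
        rw [hna]
      rw [this]
      simpa [pow_succ] using hgeo.mul_right x
  -- value of majorant sum
  have hmajsum : ∑' n : ℤ, x ^ n.natAbs = (1 + x) / (1 - x) := by
    rw [tsum_of_nat_of_neg_add_one (by simpa using hgeo)
      (by
        have : (fun n : ℕ => x ^ (-(n+1) : ℤ).natAbs) = fun n : ℕ => x ^ (n+1) := by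
          funext n
          have : ((-(n+1) : ℤ)).natAbs = n + 1 := by omega
          rw [this]
        rw [this]; simpa [pow_succ] using hgeo.mul_right x)]
    have e1 : (fun n : ℕ => x ^ ((n:ℤ)).natAbs) = fun n : ℕ => x ^ n := by
      funext n
      have : ((n:ℤ)).natAbs = n := by omega
      rw [this]
    have e2 : (fun n : ℕ => x ^ (-(n+1) : ℤ).natAbs) = fun n : ℕ => x ^ (n+1) := by
      funext n
      have : ((-(n+1) : ℤ)).natAbs = n + 1 := by omega
      rw [this]
    rw [show ∑' (n : ℕ), x ^ ((n:ℤ)).natAbs = ∑' (n : ℕ), x ^ n from congrArg (fun f : ℕ → ℝ => ∑' n, f n) e1,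
        show ∑' (n : ℕ), x ^ ((-(n+1) : ℤ)).natAbs = ∑' (n : ℕ), x ^ (n+1) from congrArg (fun f : ℕ → ℝ => ∑' n, f n) e2,
        tsum_geometric_of_lt_one hx0.le hx1]
    have : ∑' (n : ℕ), x ^ (n+1) = x * (1-x)⁻¹ := by
      simp_rw [pow_succ, mul_comm (x ^ _) x]
      rw [tsum_mul_left, tsum_geometric_of_lt_one hx0.le hx1]
    rw [this]
    field_simp
  -- split off n = 0
  have hsplit := Summable.tsum_eq_add_tsum_ite hsummable 0
  have hterm0 : jacobiTheta₂_term 0 z τ = 1 := by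
    simp [jacobiTheta₂_term]
  -- bound the tail
  have hite_norm_le : ∀ n : ℤ, ‖if n = 0 then (0:ℂ) else jacobiTheta₂_term n z τ‖ ≤
      (if n = 0 then (0:ℝ) else x ^ n.natAbs) := by
    intro n
    by_cases h : n = 0
    · simp [h]
    · simpa [h] using hbound n h
  have hmaj_ite : Summable (fun n : ℤ => if n = 0 then (0:ℝ) else x ^ n.natAbs) := by
    refine Summable.of_nonneg_of_le (fun n => ?_) (fun n => ?_) hmaj
    · by_cases h : n = 0
      · simp [h]
      · simp only [h, if_false]
        positivity
    · by_cases h : n = 0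
      · simp only [h, if_true, Int.natAbs_zero, pow_zero]
        norm_num
      · simp [h]
  have hitesum : ∑' n : ℤ, (if n = 0 then (0:ℝ) else x ^ n.natAbs) = (1+x)/(1-x) - 1 := by
    have h0 := Summable.tsum_eq_add_tsum_ite hmaj 0
    rw [hmajsum] at h0
    simp only [Int.natAbs_zero, pow_zero] at h0
    linarith
  have htail : ‖∑' n : ℤ, if n = 0 then 0 else jacobiTheta₂_term n z τ‖ < 1 := by
    have hb := tsum_of_norm_bounded hmaj_ite.hasSum hite_norm_le
    have : (1+x)/(1-x) - 1 < 1 := by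
      rw [div_sub_one (by linarith), div_lt_one (by linarith)]
      linarith
    rw [hitesum] at hb
    linarith
  intro hzero
  rw [jacobiTheta₂] at hzero
  rw [hzero, hterm0] at hsplit
  have hT : (∑' n : ℤ, if n = 0 then 0 else jacobiTheta₂_term n z τ) = -1 := by
    linear_combination -hsplit
  rw [hT] at htail
  norm_num at htail

lemma im_pow2_mul (k : ℕ) (τ : ℂ) : ((2^k : ℂ) * τ).im = 2^k * τ.im := by
  rw [show ((2^k : ℂ)) = (((2:ℝ)^k : ℝ) : ℂ) by push_cast; rfl, Complex.im_ofReal_mul]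

lemma jacobiTheta₂_ne_zero_of_strip {z τ : ℂ} (hτ : 0 < τ.im) (hz : 2 * |z.im| < τ.im) :
    jacobiTheta₂ z τ ≠ 0 := by
  set r : ℝ := |z.im| / τ.im with hrdef
  have hr0 : 0 ≤ r := div_nonneg (abs_nonneg _) hτ.le
  have hr : r < 1/2 := by
    rw [hrdef, div_lt_iff₀ hτ]
    linarith
  have hzr : |z.im| = r * τ.im := by
    rw [hrdef]; field_simp
  intro hzero
  -- descent
  have step : ∀ (w σ : ℂ), 0 < σ.im → |w.im| ≤ r * σ.im → jacobiTheta₂ w σ = 0 →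
      ∃ w', jacobiTheta₂ w' (2*σ) = 0 ∧ |w'.im| ≤ r * (2*σ).im := by
    intro w σ hσ hw h0
    have hid := theta_prod_identity w σ hσ
    rw [h0, zero_mul] at hid
    have h2σ : (2*σ).im = 2 * σ.im := by simp [Complex.mul_im]
    rcases mul_eq_zero.mp hid.symm with h | h
    · refine ⟨2*w + 1/2, h, ?_⟩
      have : (2*w + 1/2).im = 2 * w.im := by simp [Complex.add_im, Complex.mul_im]
      rw [this, h2σ, abs_mul]
      rw [show |(2:ℝ)| = 2 by norm_num]
      nlinarith
    · refine ⟨1/2, h, ?_⟩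
      have : ((1:ℂ)/2).im = 0 := by norm_num
      rw [this, h2σ, abs_zero]
      positivity
  have iter : ∀ k : ℕ, ∃ w, jacobiTheta₂ w ((2^k : ℂ) * τ) = 0 ∧ |w.im| ≤ r * ((2^k : ℂ) * τ).im := by
    intro k
    induction k with
    | zero => exact ⟨z, by simpa using hzero, by simpa using hzr.le⟩
    | succ k ih =>
      obtain ⟨w, h0, hw⟩ := ih
      have him : 0 < ((2^k : ℂ) * τ).im := by
        rw [im_pow2_mul]; positivity
      obtain ⟨w', h0', hw'⟩ := step w _ him hw h0
      refine ⟨w', ?_, ?_⟩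
      · rw [show ((2^(k+1) : ℂ)) * τ = 2 * ((2^k : ℂ) * τ) by ring]
        exact h0'
      · rw [show ((2^(k+1) : ℂ)) * τ = 2 * ((2^k : ℂ) * τ) by ring]
        exact hw'
  -- choose k large
  have hc : 0 < π * τ.im * (1 - 2*r) := by
    have : 0 < 1 - 2*r := by linarith
    positivity
  obtain ⟨k, hk⟩ := pow_unbounded_of_one_lt (Real.log 3 / (π * τ.im * (1 - 2*r))) (one_lt_two (α := ℝ))
  obtain ⟨w, h0, hw⟩ := iter k
  have him : ((2^k : ℂ) * τ).im = 2^k * τ.im := im_pow2_mul k τ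
  have hτk : 0 < ((2^k : ℂ) * τ).im := by rw [him]; positivity
  refine jacobiTheta₂_ne_zero_of_small hτk hr0 hw ?_ h0
  rw [him]
  have hlog : Real.log 3 < 2^k * (π * τ.im * (1 - 2*r)) := by
    rw [div_lt_iff₀ hc] at hk
    linarith
  have : π * (2^k * τ.im) * (1 - 2*r) = 2^k * (π * τ.im * (1 - 2*r)) := by ring
  rw [this]
  calc rexp (-(2^k * (π * τ.im * (1 - 2*r)))) < rexp (-(Real.log 3)) := by
        apply Real.exp_lt_exp.mpr; linarith
    _ = 1/3 := by
        rw [Real.exp_neg, Real.exp_log (by norm_num : (0:ℝ) < 3)]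
        norm_num

lemma jacobiTheta₂_add_int (z τ : ℂ) (m : ℤ) : jacobiTheta₂ (z + m) τ = jacobiTheta₂ z τ := by
  refine tsum_congr fun n => ?_
  rw [jacobiTheta₂_term, jacobiTheta₂_term,
    show 2*(π:ℂ)*I*n*(z+m) + π*I*n^2*τ = (2*π*I*n*z + π*I*n^2*τ) + (n*m : ℤ)*(2*π*I) by
      push_cast; ring,
    Complex.exp_add, Complex.exp_int_mul_two_pi_mul_I, mul_one]

lemma jacobiTheta₂_add_int_mul (z τ : ℂ) (n : ℤ) :
    jacobiTheta₂ (z + n*τ) τ = cexp (-π*I*((n:ℂ)^2*τ + 2*n*z)) * jacobiTheta₂ z τ := by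
  conv_rhs => rw [jacobiTheta₂, ← tsum_mul_left, ← (Equiv.addRight n).tsum_eq]
  refine tsum_congr fun j => ?_
  simp only [jacobiTheta₂_term, Equiv.coe_addRight, Int.cast_add, ← Complex.exp_add]
  congr 1
  push_cast
  ring

lemma jacobiTheta₂_add_int_mul_eq_zero_iff (z τ : ℂ) (n : ℤ) :
    jacobiTheta₂ (z + n*τ) τ = 0 ↔ jacobiTheta₂ z τ = 0 := by
  rw [jacobiTheta₂_add_int_mul, mul_eq_zero]
  simp [Complex.exp_ne_zero]

lemma jacobiTheta₂_half_add_half_mul_eq_zero (τ : ℂ) :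
    jacobiTheta₂ (1/2 + τ/2) τ = 0 := by
  set z₀ : ℂ := 1/2 + τ/2 with hz₀
  have h1 : jacobiTheta₂ z₀ τ = jacobiTheta₂ (z₀ - τ) τ := by
    calc jacobiTheta₂ z₀ τ = jacobiTheta₂ (-z₀) τ := (jacobiTheta₂_neg_left z₀ τ).symm
      _ = jacobiTheta₂ (-z₀ + 1) τ := (jacobiTheta₂_add_left (-z₀) τ).symm
      _ = jacobiTheta₂ (z₀ - τ) τ := by rw [show -z₀ + 1 = z₀ - τ by rw [hz₀]; ring]
  have h2 := jacobiTheta₂_add_left' (z₀ - τ) τ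
  rw [sub_add_cancel] at h2
  have h3 : cexp (-↑π * I * (τ + 2 * (z₀ - τ))) = -1 := by
    rw [show -↑π * I * (τ + 2 * (z₀ - τ)) = ↑π * I + (-1 : ℤ) * (2 * ↑π * I) by
      rw [hz₀]; push_cast; ring, Complex.exp_add, Complex.exp_int_mul_two_pi_mul_I, mul_one,
      Complex.exp_pi_mul_I]
  rw [h3, ← h1] at h2
  linear_combination h2/2

theorem jacobiTheta₂_eq_zero_iff {z τ : ℂ} (hτ : 0 < τ.im) :
    jacobiTheta₂ z τ = 0 ↔ ∃ m n : ℤ, z = 1/2 + τ/2 + m + n * τ := by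
  constructor
  · intro h0
    -- reduce imaginary part mod τ
    set t := τ.im with ht
    set n : ℤ := ⌊z.im / t + 1/2⌋ with hn
    have hn1 : (n : ℝ) ≤ z.im / t + 1/2 := Int.floor_le _
    have hn2 : z.im / t + 1/2 < n + 1 := Int.lt_floor_add_one _
    set z' := z - n * τ with hz'
    have h0' : jacobiTheta₂ z' τ = 0 := by
      have := (jacobiTheta₂_add_int_mul_eq_zero_iff z' τ n).mp
      apply this
      rw [show z' + n * τ = z by rw [hz']; ring]
      exact h0
    have him : z'.im = z.im - n * t := by
      rw [hz']
      simp [Complex.sub_im, Complex.mul_im]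
      exact Or.inl ht.symm
    have hlow : -t/2 ≤ z'.im := by
      rw [him]
      have := mul_le_mul_of_nonneg_right hn1 hτ.le
      rw [add_mul, div_mul_cancel₀ _ hτ.ne'] at this
      linarith
    have hhigh : z'.im < t/2 := by
      rw [him]
      have := mul_lt_mul_of_pos_right hn2 hτ
      rw [add_mul, div_mul_cancel₀ _ hτ.ne'] at this
      linarith
    have hedge : z'.im = -t/2 := by
      by_contra hne
      have h1 : -(t/2) < z'.im := by
        rcases lt_or_eq_of_le hlow with h | h
        · linarith
        · exfalso; exact hne (by linarith)
      have habs : |z'.im| < t/2 := abs_lt.mpr ⟨h1, hhigh⟩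
      exact jacobiTheta₂_ne_zero_of_strip hτ (by linarith) h0'
    -- now the boundary case: z'.im = -t/2
    set w := -z' with hw
    have h0w : jacobiTheta₂ w τ = 0 := by
      rw [hw, jacobiTheta₂_neg_left]; exact h0'
    have hwim : w.im = t/2 := by rw [hw, Complex.neg_im, hedge]; ring
    set x := w - τ/2 with hx
    have hxim : x.im = 0 := by
      rw [hx, Complex.sub_im]
      have : (τ/2).im = t/2 := by
        rw [Complex.div_im, ht]
        simp [Complex.normSq_apply]
        ring
      rw [this, hwim]; ring
    set a := x.re with ha
    have hxa : x = (a : ℂ) := by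
      apply Complex.ext
      · simp [ha]
      · simp [hxim]
    have hτ0 : τ ≠ 0 := by
      intro h
      have : t = 0 := by rw [ht, h, Complex.zero_im]
      linarith
    -- functional equation
    have hfe := jacobiTheta₂_functional_equation w τ
    have hpow : ((-I*τ) ^ (1/2 : ℂ)) ≠ 0 := by
      rw [Complex.cpow_def_of_ne_zero (by simp [hτ0, Complex.I_ne_zero])]
      exact Complex.exp_ne_zero _
    have h0w' : jacobiTheta₂ (w/τ) (-1/τ) = 0 := by
      rw [h0w] at hfe
      have := hfe.symm
      rcases mul_eq_zero.mp this with h | h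
      · rcases mul_eq_zero.mp h with h' | h'
        · exact absurd h' (by rw [one_div]; exact inv_ne_zero hpow)
        · exact absurd h' (Complex.exp_ne_zero _)
      · exact h
    set τ' : ℂ := -1/τ with hτ'
    have hτ'im : 0 < τ'.im := by
      have hns : 0 < Complex.normSq τ := Complex.normSq_pos.mpr hτ0
      have him' : τ'.im = τ.im / Complex.normSq τ := by
        rw [hτ', show (-1 : ℂ)/τ = -τ⁻¹ by field_simp, Complex.neg_im, Complex.inv_im]
        ring
      rw [him']
      exact div_pos (ht ▸ hτ) hns
    have hwτ : w/τ = 1/2 + (-a : ℝ) * τ' := by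
      rw [hτ']
      have : w = τ/2 + (a:ℂ) := by rw [← hxa, hx]; ring
      rw [this]
      push_cast
      field_simp
    -- reduce a mod 1
    set j : ℤ := ⌊a + 1/2⌋ with hj
    have hj1 : (j : ℝ) ≤ a + 1/2 := Int.floor_le _
    have hj2 : a + 1/2 < j + 1 := Int.lt_floor_add_one _
    have h0u : jacobiTheta₂ (1/2 + ((j : ℝ) - a) * τ') τ' = 0 := by
      have := (jacobiTheta₂_add_int_mul_eq_zero_iff (w/τ) τ' j).mpr h0w'
      rw [hwτ] at this
      rw [show ((1:ℂ)/2 + ((j:ℝ) - a) * τ') = 1/2 + ((-a : ℝ)) * τ' + j * τ' by push_cast; ring]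
      exact this
    have huim : ((1:ℂ)/2 + ((j : ℝ) - a) * τ').im = ((j:ℝ) - a) * τ'.im := by
      simp [Complex.add_im, Complex.mul_im]
    have hja : (j : ℝ) - a = 1/2 := by
      by_contra hne
      have hlt : (j:ℝ) - a < 1/2 := by
        rcases lt_or_eq_of_le (by linarith : (j:ℝ) - a ≤ 1/2) with h | h
        · exact h
        · exact absurd h hne
      have habs : |(j:ℝ) - a| < 1/2 := abs_lt.mpr ⟨by linarith, hlt⟩
      refine jacobiTheta₂_ne_zero_of_strip hτ'im ?_ h0u
      rw [huim, abs_mul, abs_of_pos hτ'im]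
      nlinarith
    refine ⟨-j, n - 1, ?_⟩
    have hzeq : z = z' + n * τ := by rw [hz']; ring
    have hz'w : z' = -w := by rw [hw]; ring
    have hweq : w = τ/2 + (a:ℂ) := by rw [← hxa, hx]; ring
    have haj : (a : ℂ) = (j : ℂ) - 1/2 := by
      have : a = (j : ℝ) - 1/2 := by linarith
      rw [this]; push_cast; ring
    rw [hzeq, hz'w, hweq, haj]
    push_cast
    ring
  · rintro ⟨m, n, rfl⟩
    rw [show (1:ℂ)/2 + τ/2 + m + n*τ = ((1/2 + τ/2 + m) + n*τ) by ring,
      jacobiTheta₂_add_int_mul_eq_zero_iff, jacobiTheta₂_add_int]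
    exact jacobiTheta₂_half_add_half_mul_eq_zero τ

lemma jtheta_eq (p q : ℝ) (z τ : ℂ) :
    jtheta p q z τ =
      e ((1/2:ℂ)*(p:ℂ)^2*τ + p*(z+q)) * jacobiTheta₂ (z + p*τ + q) τ := by
  rw [jtheta, jacobiTheta₂, ← tsum_mul_left]
  refine tsum_congr fun n => ?_
  rw [jacobiTheta₂_term, e, e, ← Complex.exp_add]
  congr 1
  push_cast
  ring

lemma e_ne_zero (x : ℂ) : e x ≠ 0 := Complex.exp_ne_zero _


end
end ThetaAux

open Complex Real in
/-- Lemma: the zero set of `z ↦ θ_k^{(N)}(z,τ)`. -/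
theorem thetaN_zero_set (N : ℕ) (hN : 0 < N) (k : ℤ) (τ : ℍ) :
    (Odd N → {z : ℂ | thetaN N (k : ℝ) z τ = 0} =
      {z : ℂ | ∃ m n : ℤ, z = (m : ℂ) / N + ((k : ℂ) / N) * τ + n * τ}) ∧
    (Even N → {z : ℂ | thetaN N (k : ℝ) z τ = 0} =
      {z : ℂ | ∃ m n : ℤ, z = 1 / (2 * N) + (m : ℂ) / N + ((k : ℂ) / N) * τ + n * τ}) := by
  set τc : ℂ := (τ : ℂ) with hτc
  have hτim : 0 < τc.im := τ.2
  have hN0 : (N : ℂ) ≠ 0 := Nat.cast_ne_zero.mpr hN.ne'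
  have hNτ : 0 < ((N:ℂ) * τc).im := by
    rw [show ((N:ℂ)) = (((N:ℝ)) : ℂ) by push_cast; rfl, Complex.im_ofReal_mul]
    have : (0:ℝ) < N := by exact_mod_cast hN
    positivity
  -- the basic zero criterion
  have hcrit : ∀ z : ℂ, thetaN N (k : ℝ) z τc = 0 ↔
      ∃ m n : ℤ, (N:ℂ) * z = (k:ℂ) * τc + 1/2 - N/2 + m + n * N * τc := by
    intro z
    rw [thetaN, jtheta_eq, mul_eq_zero]
    simp only [e_ne_zero, false_or]
    rw [jacobiTheta₂_eq_zero_iff hNτ]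
    have hcast1 : (((1:ℝ)/2 - (k:ℝ)/N : ℝ) : ℂ) = 1/2 - (k:ℂ)/N := by push_cast; ring
    have hcast2 : (((N:ℝ)/2 : ℝ) : ℂ) = (N:ℂ)/2 := by push_cast; ring
    rw [hcast1, hcast2]
    have hsimp : ((1:ℂ)/2 - (k:ℂ)/N) * ((N:ℂ) * τc) = (N:ℂ)*τc/2 - (k:ℂ)*τc := by
      field_simp
    rw [hsimp]
    constructor
    · rintro ⟨m, n, h⟩
      exact ⟨m, n, by linear_combination h⟩
    · rintro ⟨m, n, h⟩
      exact ⟨m, n, by linear_combination h⟩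
  constructor
  · intro hodd
    obtain ⟨l, hl⟩ := hodd
    have hNc : (N : ℂ) = 2*(l:ℂ) + 1 := by
      have : (N : ℤ) = 2*l + 1 := by exact_mod_cast hl
      exact_mod_cast this
    ext z
    simp only [Set.mem_setOf_eq]
    rw [hcrit z]
    constructor
    · rintro ⟨m, n, h⟩
      refine ⟨m - l, n, ?_⟩
      apply mul_left_cancel₀ hN0
      rw [show (N:ℂ) * (((m - l : ℤ) : ℂ)/N + ((k:ℂ)/N)*τc + n*τc)
          = ((m - l : ℤ) : ℂ) + (k:ℂ)*τc + n*N*τc by field_simp]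
      push_cast
      rw [hNc] at h ⊢
      linear_combination h
    · rintro ⟨m, n, h⟩
      refine ⟨m + l, n, ?_⟩
      have h' := congrArg (fun w => (N:ℂ) * w) h
      rw [show (N:ℂ) * ((m:ℂ)/N + ((k:ℂ)/N)*τc + n*τc)
          = (m:ℂ) + (k:ℂ)*τc + n*N*τc by field_simp] at h'
      push_cast
      rw [hNc] at h' ⊢
      linear_combination h'
  · intro heven
    obtain ⟨l, hl⟩ := heven
    have hNc : (N : ℂ) = 2*(l:ℂ) := by
      have : (N : ℤ) = 2*l := by exact_mod_cast (by omega : N = 2*l)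
      exact_mod_cast this
    have hl0 : 0 < l := by omega
    ext z
    simp only [Set.mem_setOf_eq]
    rw [hcrit z]
    constructor
    · rintro ⟨m, n, h⟩
      refine ⟨m - l, n, ?_⟩
      apply mul_left_cancel₀ hN0
      rw [show (N:ℂ) * (1/(2*(N:ℂ)) + ((m - l : ℤ) : ℂ)/N + ((k:ℂ)/N)*τc + n*τc)
          = 1/2 + ((m - l : ℤ) : ℂ) + (k:ℂ)*τc + n*N*τc by field_simp]
      push_cast
      rw [hNc] at h ⊢
      linear_combination h
    · rintro ⟨m, n, h⟩
      refine ⟨m + l, n, ?_⟩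
      have h' := congrArg (fun w => (N:ℂ) * w) h
      rw [show (N:ℂ) * (1/(2*(N:ℂ)) + (m:ℂ)/N + ((k:ℂ)/N)*τc + n*τc)
          = 1/2 + (m:ℂ) + (k:ℂ)*τc + n*N*τc by field_simp] at h'
      push_cast
      rw [hNc] at h' ⊢
      linear_combination h'
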